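/- The subdivision of any tree is singular with nullity exactly 1. -/
import Mathlib


open scoped Classical
open Matrix Polynomial

variable {V : Type*} [Fintype V] [DecidableEq V]

/-- Nullity of a real square matrix: dimension of its kernel. -/
noncomputable def nullity {m : Type*} [Fintype m] (A : Matrix m m ℝ) : ℕ :=
  Module.finrank ℝ (LinearMap.ker A.mulVecLin)

/-- The vertex-edge incidence matrix of `G`, with rows indexed by vertices and
columns indexed by edges. -/
noncomputable def incMat (G : SimpleGraph V) : Matrix V G.edgeSet ℝ :=
  Matrix.of fun v e => if v ∈ (e : Sym2 V) then 1 else 0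

/-- The adjacency matrix of the subdivision of `G`: vertices are `V(G) ⊕ E(G)`. -/
noncomputable def subdivAdj (G : SimpleGraph V) : Matrix (V ⊕ G.edgeSet) (V ⊕ G.edgeSet) ℝ :=
  Matrix.fromBlocks 0 (incMat G) (incMat G)ᵀ 0

section Aux

/-- Every edge (as an element of the edge set) comes from an adjacent pair. -/
lemma exists_rep_of_edge (G : SimpleGraph V) (e : G.edgeSet) :
    ∃ u v : V, G.Adj u v ∧ (e : Sym2 V) = s(u, v) := by
  rcases e with ⟨e, he⟩
  induction e using Sym2.ind with
  | _ u v => exact ⟨u, v, (G.mem_edgeSet).mp he, rfl⟩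

/-- Unfolding the transpose incidence matrix times a vector at an edge. -/
lemma incMat_transpose_mulVec (G : SimpleGraph V) (x : V → ℝ) (e : G.edgeSet)
    {u v : V} (huv : (e : Sym2 V) = s(u, v)) (hne : u ≠ v) :
    ((incMat G)ᵀ.mulVec x) e = x u + x v := by
  simp only [Matrix.mulVec, Matrix.transpose_apply, incMat, Matrix.of_apply, dotProduct, huv]
  have key : ∀ a : V, (if a ∈ s(u, v) then (1 : ℝ) else 0) * x a
      = (if a = u then x a else 0) + (if a = v then x a else 0) := by
    intro a
    rcases eq_or_ne a u with rfl | hu <;> rcases eq_or_ne a v with rfl | hv <;>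
      simp_all [Sym2.mem_iff]
  simp only [key]
  rw [Finset.sum_add_distrib, Finset.sum_ite_eq' Finset.univ u x,
    Finset.sum_ite_eq' Finset.univ v x]
  simp

/-- Along a walk, a function constant across edges is constant. -/
lemma eq_of_walk {G : SimpleGraph V} {z : V → ℝ} (hz : ∀ ⦃a b : V⦄, G.Adj a b → z a = z b)
    {a b : V} (p : G.Walk a b) : z a = z b := by
  induction p with
  | nil => rfl
  | cons h _ ih => exact (hz h).trans ih

/-- In a tree, the distances to adjacent vertices differ by exactly one. -/
lemma tree_dist_adj {G : SimpleGraph V} (hT : G.IsTree) (r : V) {u v : V} (h : G.Adj u v) :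
    G.dist r v = G.dist r u + 1 ∨ G.dist r u = G.dist r v + 1 := by
  have hconn := hT.isConnected
  obtain ⟨p, hp, hplen⟩ := hconn.exists_path_of_dist r u
  obtain ⟨q, hq, hqlen⟩ := hconn.exists_path_of_dist r v
  by_contra hcon
  push_neg at hcon
  obtain ⟨h1, h2⟩ := hcon
  have hle1 : G.dist r v ≤ G.dist r u + 1 := by
    have := SimpleGraph.dist_le (p.concat h)
    simpa [SimpleGraph.Walk.length_concat, hplen] using this
  have hle2 : G.dist r u ≤ G.dist r v + 1 := by
    have := SimpleGraph.dist_le (q.concat h.symm)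
    simpa [SimpleGraph.Walk.length_concat, hqlen] using this
  have heq : G.dist r u = G.dist r v := by omega
  -- show v ∉ p.support
  have hvns : v ∉ p.support := by
    intro hv
    have hspec := congrArg SimpleGraph.Walk.length (p.take_spec hv)
    rw [SimpleGraph.Walk.length_append] at hspec
    have hd : G.dist r v ≤ (p.takeUntil v hv).length := SimpleGraph.dist_le _
    have hdrop0 : (p.dropUntil v hv).length = 0 := by omega
    exact h.ne' (SimpleGraph.Walk.eq_of_length_eq_zero hdrop0)
  -- build a path from r to v of length dist r u + 1
  have hq' : (SimpleGraph.Walk.cons h.symm p.reverse).IsPath := by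
    apply hp.reverse.cons
    rw [SimpleGraph.Walk.support_reverse, List.mem_reverse]
    exact hvns
  have huniq := hT.IsAcyclic.path_unique
    ⟨(SimpleGraph.Walk.cons h.symm p.reverse).reverse, hq'.reverse⟩ ⟨q, hq⟩
  have hlen : ((SimpleGraph.Walk.cons h.symm p.reverse).reverse).length = q.length := by
    rw [Subtype.ext_iff] at huniq
    exact congrArg SimpleGraph.Walk.length huniq
  rw [SimpleGraph.Walk.length_reverse, SimpleGraph.Walk.length_cons,
    SimpleGraph.Walk.length_reverse, hplen, hqlen] at hlen
  omega

/-- The kernel of the transpose incidence matrix of a tree has dimension 1. -/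
lemma finrank_ker_transpose (T : SimpleGraph V) (hT : T.IsTree) :
    Module.finrank ℝ (LinearMap.ker ((incMat T)ᵀ.mulVecLin)) = 1 := by
  have hne : Nonempty V := hT.isConnected.nonempty
  obtain ⟨r⟩ := hne
  set s : V → ℝ := fun v => (-1 : ℝ) ^ (T.dist r v) with hs
  have hs_sq : ∀ v, s v * s v = 1 := by
    intro v
    simp [hs, ← pow_add, pow_mul']
  have hs_adj : ∀ ⦃u v : V⦄, T.Adj u v → s u = -s v := by
    intro u v h
    rcases tree_dist_adj hT r h with hd | hd <;> simp [hs, hd, pow_succ]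
  have hsr : s r = 1 := by simp [hs, SimpleGraph.dist_self]
  have hs_ne : s ≠ 0 := by
    intro h0
    have := congrFun h0 r
    rw [hsr] at this
    norm_num at this
  have hker : LinearMap.ker ((incMat T)ᵀ.mulVecLin) = Submodule.span ℝ {s} := by
    ext x
    constructor
    · intro hx
      rw [LinearMap.mem_ker, Matrix.mulVecLin_apply] at hx
      have hedge : ∀ ⦃u v : V⦄, T.Adj u v → x u + x v = 0 := by
        intro u v h
        have he : s(u, v) ∈ T.edgeSet := h
        have := congrFun hx (⟨s(u, v), he⟩ : T.edgeSet)
        rwa [incMat_transpose_mulVec T x _ rfl h.ne] at this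
      set z : V → ℝ := fun v => x v * s v with hz
      have hz_adj : ∀ ⦃a b : V⦄, T.Adj a b → z a = z b := by
        intro a b h
        have h1 := hedge h
        have h2 := hs_adj h
        simp only [hz]
        have : x a = -x b := by linarith
        rw [this, h2]; ring
      have hz_const : ∀ v, z v = x r := by
        intro v
        have hreach : T.Reachable r v := hT.isConnected.preconnected r v
        obtain ⟨p⟩ := hreach
        have := eq_of_walk hz_adj p
        rw [← this]
        simp [hz, hsr]
      rw [Submodule.mem_span_singleton]
      refine ⟨x r, ?_⟩
      funext v
      have h1 : x v * s v = x r := hz_const v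
      have h2 := hs_sq v
      simp only [Pi.smul_apply, smul_eq_mul]
      symm
      calc x v = x v * (s v * s v) := by rw [h2, mul_one]
        _ = (x v * s v) * s v := by ring
        _ = x r * s v := by rw [h1]
    · intro hx
      rw [Submodule.mem_span_singleton] at hx
      obtain ⟨c, rfl⟩ := hx
      rw [LinearMap.mem_ker, LinearMap.map_smul]
      suffices hsk : (incMat T)ᵀ.mulVecLin s = 0 by rw [hsk, smul_zero]
      rw [Matrix.mulVecLin_apply]
      funext e
      obtain ⟨u, v, huv, he⟩ := exists_rep_of_edge T e
      rw [incMat_transpose_mulVec T s e he huv.ne]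
      rw [hs_adj huv]
      simp
  rw [hker]
  exact finrank_span_singleton hs_ne

/-- The kernel of the incidence matrix of a tree is trivial. -/
lemma finrank_ker_inc (T : SimpleGraph V) (hT : T.IsTree) :
    Module.finrank ℝ (LinearMap.ker ((incMat T).mulVecLin)) = 0 := by
  have hcardV : 0 < Fintype.card V := Fintype.card_pos_iff.mpr hT.isConnected.nonempty
  have hcardE : Fintype.card T.edgeSet + 1 = Fintype.card V := by
    rw [← SimpleGraph.edgeFinset_card, hT.card_edgeFinset]
  have hrn1 := LinearMap.finrank_range_add_finrank_ker ((incMat T)ᵀ.mulVecLin)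
  have hrn2 := LinearMap.finrank_range_add_finrank_ker ((incMat T).mulVecLin)
  rw [Module.finrank_fintype_fun_eq_card, finrank_ker_transpose T hT] at hrn1
  rw [Module.finrank_fintype_fun_eq_card] at hrn2
  have hrank : ((incMat T)ᵀ).rank = (incMat T).rank := Matrix.rank_transpose _
  have e1 : ((incMat T)ᵀ).rank
      = Module.finrank ℝ (LinearMap.range ((incMat T)ᵀ.mulVecLin)) := rfl
  have e2 : (incMat T).rank
      = Module.finrank ℝ (LinearMap.range ((incMat T).mulVecLin)) := rfl
  omega

end Aux

/-- The subdivision of any tree is singular with nullity exactly 1. -/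
theorem stmt_15 (T : SimpleGraph V) (hT : T.IsTree) :
    nullity (subdivAdj T) = 1 := by
  have hker : ∀ z : (V ⊕ T.edgeSet) → ℝ,
      z ∈ LinearMap.ker (subdivAdj T).mulVecLin ↔
      ((incMat T)ᵀ.mulVec (z ∘ Sum.inl) = 0 ∧ (incMat T).mulVec (z ∘ Sum.inr) = 0) := by
    intro z
    rw [LinearMap.mem_ker, Matrix.mulVecLin_apply]
    conv_lhs => rw [← Sum.elim_comp_inl_inr z]
    rw [subdivAdj, Matrix.fromBlocks_mulVec]
    simp only [Matrix.zero_mulVec, zero_add, add_zero]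
    constructor
    · intro h
      constructor
      · funext e
        exact congrFun h (Sum.inr e)
      · funext v
        exact congrFun h (Sum.inl v)
    · rintro ⟨h1, h2⟩
      funext x
      cases x with
      | inl v => exact congrFun h2 v
      | inr e => exact congrFun h1 e
  let f : LinearMap.ker (subdivAdj T).mulVecLin →ₗ[ℝ]
      (LinearMap.ker ((incMat T)ᵀ.mulVecLin)) × (LinearMap.ker ((incMat T).mulVecLin)) :=
    { toFun := fun z => (⟨(z : (V ⊕ T.edgeSet) → ℝ) ∘ Sum.inl, by
        rw [LinearMap.mem_ker, Matrix.mulVecLin_apply]; exact ((hker z).mp z.2).1⟩,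
        ⟨(z : (V ⊕ T.edgeSet) → ℝ) ∘ Sum.inr, by
        rw [LinearMap.mem_ker, Matrix.mulVecLin_apply]; exact ((hker z).mp z.2).2⟩)
      map_add' := fun z w => by
        ext x <;> rfl
      map_smul' := fun c z => by
        ext x <;> rfl }
  have hbij : Function.Bijective f := by
    constructor
    · intro z w hzw
      ext x
      cases x with
      | inl v => exact congrFun (congrArg (Subtype.val) (congrArg Prod.fst hzw)) v
      | inr e => exact congrFun (congrArg (Subtype.val) (congrArg Prod.snd hzw)) e
    · rintro ⟨⟨x, hx⟩, ⟨y, hy⟩⟩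
      rw [LinearMap.mem_ker, Matrix.mulVecLin_apply] at hx hy
      refine ⟨⟨Sum.elim x y, (hker _).mpr ⟨by simpa using hx, by simpa using hy⟩⟩, ?_⟩
      ext t
      · rfl
      · rfl
  let e := LinearEquiv.ofBijective f hbij
  have := e.finrank_eq
  rw [nullity, this, Module.finrank_prod, finrank_ker_transpose T hT, finrank_ker_inc T hT]
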